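/- Let C be a triangulated category and T a contravariantly finite rigid full subcategory closed under direct summands. A morphism has the left lifting property with respect to every morphism in J^□ (where J = {0 → ΣT' : T' in T}) if and only if it is isomorphic in the arrow category to a coprojection X → X ⊕ ΣT' for some X in C and T' in T. -/

import Mathlib

open CategoryTheory CategoryTheory.Limits CategoryTheory.Pretriangulated

variable {C : Type*} [Category C] [Preadditive C] [HasZeroObject C]
  [HasShift C ℤ] [∀ n : ℤ, Functor.Additive (CategoryTheory.shiftFunctor C n)]
  [Pretriangulated C]

/-- `f` factors through an object of the set `S`. -/
def FactorsThruSet (S : Set C) {X Y : C} (f : X ⟶ Y) : Prop :=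
  ∃ U ∈ S, ∃ (a : X ⟶ U) (b : U ⟶ Y), f = a ≫ b

/-- The right perpendicular subcategory `T^⊥` of a full subcategory `T`. -/
def rperp (T : Set C) : Set C := {Z | ∀ T' ∈ T, ∀ (f : T' ⟶ Z), f = 0}

/-- The class `W` of morphisms whose connecting morphisms in any triangle factor
through `T^⊥`. -/
def Wclass (T : Set C) {X Y : C} (f : X ⟶ Y) : Prop :=
  ∀ (Z : C) (r : Z ⟶ X) (s : Y ⟶ Z⟦(1:ℤ)⟧),
    (Triangle.mk r f s ∈ distTriang C) →
      FactorsThruSet (rperp T) r ∧ FactorsThruSet (rperp T) s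

/-- A subcategory `T` is rigid if `C(T, ΣT) = 0`. -/
def IsRigid (T : Set C) : Prop :=
  ∀ T' ∈ T, ∀ T'' ∈ T, ∀ (f : T' ⟶ (T'' : C)⟦(1:ℤ)⟧), f = 0

/-- A subcategory is contravariantly finite if every object admits a right approximation. -/
def ContravariantlyFinite (T : Set C) : Prop :=
  ∀ X : C, ∃ T₀ ∈ T, ∃ (p : T₀ ⟶ X), ∀ T' ∈ T, ∀ (u : T' ⟶ X), ∃ v : T' ⟶ T₀, v ≫ p = u
open ZeroObject

/-- A subcategory is closed under direct summands. -/
def ClosedUnderSummands (T : Set C) : Prop :=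
  ∀ (X S : C) (i : X ⟶ S) (r : S ⟶ X), i ≫ r = 𝟙 X → S ∈ T → X ∈ T

/-- A subcategory is strictly full (closed under isomorphisms). -/
def ClosedUnderIso (T : Set C) : Prop :=
  ∀ X Y : C, (X ≅ Y) → X ∈ T → Y ∈ T

/-- A morphism lies in `^□(J^□)`, where `J = {0 → ΣT' : T' ∈ T}`, if and only if it is
isomorphic in the arrow category to a coprojection `X'' ⟶ X'' ⊞ ΣT'` for some `T' ∈ T`. -/
theorem llp_Jrlp_iff_coprojection [HasBinaryBiproducts C] (T : Set C)
    (hcf : ContravariantlyFinite T) (hrig : IsRigid T)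
    (hiso : ClosedUnderIso T) (hsumm : ClosedUnderSummands T)
    {X Y : C} (f : X ⟶ Y) :
    (∀ ⦃Z W : C⦄ (g : Z ⟶ W),
        (∀ T' ∈ T, HasLiftingProperty (0 : (0 : C) ⟶ (T' : C)⟦(1:ℤ)⟧) g) →
        HasLiftingProperty f g) ↔
      ∃ (X'' T' : C), T' ∈ T ∧
        Nonempty (Arrow.mk f ≅ Arrow.mk (biprod.inl : X'' ⟶ X'' ⊞ ((T' : C)⟦(1:ℤ)⟧))) := by
  constructor
  · intro H
    -- take a right `T`-approximation `p : T₀ ⟶ Y⟦-1⟧`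
    obtain ⟨T₀, hT₀, p, hp⟩ := hcf (Y⟦(-1:ℤ)⟧)
    -- the induced "`ΣT`-approximation" of `Y`
    set s : (T₀ : C)⟦(1:ℤ)⟧ ⟶ Y :=
      (shiftFunctor C (1:ℤ)).map p ≫ (shiftNegShift Y (1:ℤ)).hom with hs
    have hfac : ∀ T' ∈ T, ∀ (u : (T' : C)⟦(1:ℤ)⟧ ⟶ Y),
        ∃ v : (T' : C)⟦(1:ℤ)⟧ ⟶ (T₀ : C)⟦(1:ℤ)⟧, v ≫ s = u := by
      intro T' hT' u
      obtain ⟨w, hw⟩ := (shiftFunctor C (1:ℤ)).map_surjective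
        (u ≫ (shiftNegShift Y (1:ℤ)).inv)
      obtain ⟨v, hv⟩ := hp T' hT' w
      refine ⟨(shiftFunctor C (1:ℤ)).map v, ?_⟩
      rw [hs, ← Category.assoc, ← Functor.map_comp, hv, hw, Category.assoc,
        Iso.inv_hom_id, Category.comp_id]
    -- factor `f` as coprojection followed by `q ∈ J^□`
    set q : X ⊞ ((T₀ : C)⟦(1:ℤ)⟧) ⟶ Y := biprod.desc f s with hq
    have hqJ : ∀ T' ∈ T, HasLiftingProperty (0 : (0 : C) ⟶ (T' : C)⟦(1:ℤ)⟧) q := by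
      intro T' hT'
      constructor
      intro a b sq
      obtain ⟨v, hv⟩ := hfac T' hT' b
      exact ⟨⟨⟨v ≫ biprod.inr, (isZero_zero C).eq_of_src _ _, by
        simp [hq, hv]⟩⟩⟩
    have hlift : HasLiftingProperty f q := H q hqJ
    have sq : CommSq (biprod.inl : X ⟶ X ⊞ ((T₀ : C)⟦(1:ℤ)⟧)) f q (𝟙 Y) :=
      ⟨by simp [hq]⟩
    obtain ⟨⟨⟨l, hl₁, hl₂⟩⟩⟩ := hlift.sq_hasLift sq
    -- complete `f` to a triangle and compare with the biproduct triangle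
    obtain ⟨Z, g, h, hTri⟩ := distinguished_cocone_triangle f
    have hB : binaryBiproductTriangle X ((T₀ : C)⟦(1:ℤ)⟧) ∈ distTriang C :=
      binaryBiproductTriangle_distinguished X ((T₀ : C)⟦(1:ℤ)⟧)
    let φ : Triangle.mk f g h ⟶ binaryBiproductTriangle X ((T₀ : C)⟦(1:ℤ)⟧) :=
      completeDistinguishedTriangleMorphism _ _ hTri hB (𝟙 X) l (by
        exact hl₁.trans (Category.id_comp _).symm)
    let ψ : binaryBiproductTriangle X ((T₀ : C)⟦(1:ℤ)⟧) ⟶ Triangle.mk f g h :=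
      completeDistinguishedTriangleMorphism _ _ hB hTri (𝟙 X) q (by
        exact (biprod.inl_desc f s).trans (Category.id_comp f).symm)
    have hθ₁ : (φ ≫ ψ).hom₁ = 𝟙 X :=
      show (𝟙 X) ≫ (𝟙 X) = 𝟙 X from Category.id_comp _
    have hθ₂ : (φ ≫ ψ).hom₂ = 𝟙 Y := hl₂
    have h1 : IsIso (φ ≫ ψ).hom₁ := by rw [hθ₁]; exact IsIso.id X
    have h2 : IsIso (φ ≫ ψ).hom₂ := by rw [hθ₂]; exact IsIso.id Y
    have h3 : IsIso (φ ≫ ψ).hom₃ := isIso₃_of_isIso₁₂ (φ ≫ ψ) hTri hTri h1 h2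
    -- `Z` is a retract of `T₀⟦1⟧`, thus `Z⟦-1⟧` is a retract of `T₀`
    have hretr : φ.hom₃ ≫ (ψ.hom₃ ≫ inv (φ ≫ ψ).hom₃) = 𝟙 Z := by
      rw [← Category.assoc]
      have : φ.hom₃ ≫ ψ.hom₃ = (φ ≫ ψ).hom₃ := rfl
      rw [this, IsIso.hom_inv_id]
      rfl
    have hT'mem : (Z⟦(-1:ℤ)⟧ : C) ∈ T := by
      refine hsumm _ T₀
        ((shiftFunctor C (-1:ℤ)).map φ.hom₃ ≫ (shiftShiftNeg T₀ (1:ℤ)).hom)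
        ((shiftShiftNeg T₀ (1:ℤ)).inv ≫
          (shiftFunctor C (-1:ℤ)).map (ψ.hom₃ ≫ inv (φ ≫ ψ).hom₃ (I := h3))) ?_ hT₀
      erw [Category.assoc, Iso.hom_inv_id_assoc, ← Functor.map_comp, hretr]
      simp
    -- the triangle of `f` splits
    have hzero : h = 0 := by
      have hφ₁ : φ.hom₁ = 𝟙 X := rfl
      have := φ.comm₃
      dsimp [binaryBiproductTriangle] at this
      erw [comp_zero] at this
      rw [hφ₁] at this
      erw [CategoryTheory.Functor.map_id, Category.comp_id] at this
      exact this
    obtain ⟨e, he₁, he₂⟩ : ∃ e : Y ≅ X ⊞ Z, f ≫ e.hom = biprod.inl ∧ g = e.hom ≫ biprod.snd :=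
      exists_iso_binaryBiproduct_of_distTriang (Triangle.mk f g h) hTri hzero
    refine ⟨X, Z⟦(-1:ℤ)⟧, hT'mem, ⟨Arrow.isoMk (Iso.refl X)
      (e ≪≫ biprod.mapIso (Iso.refl X) (shiftNegShift Z (1:ℤ)).symm) ?_⟩⟩
    dsimp
    rw [Category.id_comp, ← Category.assoc, he₁]
    ext
    · simp
      erw [biprod.inl_map_assoc, biprod.inl_fst, Category.comp_id]
    · simp
      erw [biprod.inl_map_assoc, biprod.inl_snd, comp_zero]
  · rintro ⟨X'', T', hT', ⟨e⟩⟩ Z W g hg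
    have : HasLiftingProperty (biprod.inl : X'' ⟶ X'' ⊞ ((T' : C)⟦(1:ℤ)⟧)) g := by
      constructor
      intro a b sq
      have hg' := hg T' hT'
      have sq' : CommSq (0 : (0:C) ⟶ Z) (0 : (0:C) ⟶ (T' : C)⟦(1:ℤ)⟧) g
          (biprod.inr ≫ b) := ⟨(isZero_zero C).eq_of_src _ _⟩
      obtain ⟨⟨⟨l₂, _, hl₂⟩⟩⟩ := hg'.sq_hasLift sq'
      refine ⟨⟨⟨biprod.desc a l₂, by simp, ?_⟩⟩⟩
      ext
      · simpa using sq.w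
      · simpa using hl₂
    exact HasLiftingProperty.of_arrow_iso_left e.symm g
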